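/- For every z ∈ ℂ with Im z > 0, the value tan z is defined (tan has no poles in the open upper half-plane) and satisfies Im(tan z) ≥ (1 − e^{−2·Im z})/2. In particular tan maps the open upper half-plane into itself, and Im z = O(Im tan z) uniformly in Re z as Im z → 0. -/

import Mathlib

open Complex Set Filter MeasureTheory Topology
open scoped ENNReal

noncomputable section

/-- The open upper half-plane, as a subset of `ℂ`. -/
def UHP : Set ℂ := {z : ℂ | 0 < z.im}

/-- A real entire function: entire, mapping `ℝ` into `ℝ`. -/
def RealEntire (f : ℂ → ℂ) : Prop :=
  Differentiable ℂ f ∧ ∀ x : ℝ, (f (x : ℂ)).im = 0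

/-- A function is transcendental if it is not a polynomial. -/
def TranscendentalFun (f : ℂ → ℂ) : Prop :=
  ¬ ∃ p : Polynomial ℂ, ∀ z : ℂ, f z = p.eval z

/-- The maximum modulus `M(r, f)`. -/
def maxMod (f : ℂ → ℂ) (r : ℝ) : ℝ :=
  sSup ((fun z => ‖f z‖) '' Metric.sphere (0 : ℂ) r)

/-- `f` has infinite order: `limsup (log log M(r,f)) / log r = ∞`. -/
def InfiniteOrder (f : ℂ → ℂ) : Prop :=
  ∀ c r₀ : ℝ, ∃ r : ℝ, r₀ ≤ r ∧ c * Real.log r < Real.log (Real.log (maxMod f r))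

/-- `f` has only finitely many non-real zeros. -/
def FinitelyManyNonRealZeros (f : ℂ → ℂ) : Prop :=
  {z : ℂ | z.im ≠ 0 ∧ f z = 0}.Finite

open Classical in
/-- The order of a meromorphic function at a point (junk value `0` if not meromorphic there). -/
def merOrder (g : ℂ → ℂ) (z : ℂ) : WithTop ℤ :=
  if h : MeromorphicAt g z then meromorphicOrderAt g z else 0

/-- Multiplicity of `z` as a zero of `g` (0 if not a zero). -/
def zeroMult (g : ℂ → ℂ) (z : ℂ) : ℕ := (WithTop.untopD 0 (merOrder g z)).toNat

/-- Multiplicity of `z` as a pole of `g` (0 if not a pole). -/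
def poleMult (g : ℂ → ℂ) (z : ℂ) : ℕ := (-(WithTop.untopD 0 (merOrder g z))).toNat

/-- `g` has a pole at `z`. -/
def IsPoleAt (g : ℂ → ℂ) (z : ℂ) : Prop := MeromorphicAt g z ∧ merOrder g z < 0

/-- The Weierstrass primary factor `E_q(w)`. -/
def weierstrassE (q : ℕ) (w : ℂ) : ℂ :=
  (1 - w) * Complex.exp (∑ k ∈ Finset.range q, w ^ (k + 1) / ((k : ℂ) + 1))

/-- A real entire function with only real zeros, of genus at most `2p+1`,
written in Hadamard product form. -/
def GenusForm (p : ℕ) (g : ℂ → ℂ) : Prop :=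
  ∃ (c : ℝ) (μ : ℕ) (Q : Polynomial ℝ) (q : ℕ) (ι : Type) (a : ι → ℝ),
    Countable ι ∧ c ≠ 0 ∧ Q.natDegree ≤ 2 * p + 1 ∧ q ≤ 2 * p + 1 ∧
    (∀ i, a i ≠ 0) ∧ Summable (fun i => |a i| ^ (-((q : ℝ) + 1))) ∧
    ∀ z : ℂ, g z = (c : ℂ) * z ^ μ * Complex.exp ((Q.map (algebraMap ℝ ℂ)).eval z) *
      ∏' i, weierstrassE q (z / (a i : ℂ))

/-- The class `V_{2p}`. -/
def VClass (p : ℕ) : Set (ℂ → ℂ) :=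
  {f | ∃ (a : ℝ) (g : ℂ → ℂ), 0 ≤ a ∧ Differentiable ℂ g ∧ GenusForm p g ∧
    ∀ z : ℂ, f z = g z * Complex.exp (-(a : ℂ) * z ^ (2 * p + 2))}

/-- The class `U_{2p}`: `U_0 = V_0`, `U_{2p} = V_{2p} \ V_{2p-2}` for `p ≥ 1`. -/
def UClass (p : ℕ) : Set (ℂ → ℂ) :=
  if p = 0 then VClass 0 else VClass p \ VClass (p - 1)

/-- The class `U_{2p}^*`: functions `f = P·h` with `h ∈ U_{2p}` and `P` a real
polynomial without real zeros. -/
def UStarClass (p : ℕ) : Set (ℂ → ℂ) :=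
  {f | ∃ (P : Polynomial ℝ) (h : ℂ → ℂ), (∀ x : ℝ, P.eval x ≠ 0) ∧ h ∈ UClass p ∧
    ∀ z : ℂ, f z = (P.map (algebraMap ℝ ℂ)).eval z * h z}

/-- Positive part of the logarithm. -/
def posLog (x : ℝ) : ℝ := max (Real.log x) 0

/-- `𝔫(t, g)`: number of poles of `g`, with multiplicity, in `{z : |z - it/2| ≤ t/2, |z| ≥ 1}`. -/
def tsujiSmalln (g : ℂ → ℂ) (t : ℝ) : ℝ :=
  ∑' z : {z : ℂ | ‖z - Complex.I * (t / 2)‖ ≤ t / 2 ∧ 1 ≤ ‖z‖},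
    (poleMult g z : ℝ)

/-- `𝔑(r, g)`. -/
def tsujiBigN (g : ℂ → ℂ) (r : ℝ) : ℝ :=
  ∫ t in (1 : ℝ)..r, tsujiSmalln g t / t ^ 2

/-- `𝔪(r, g)`. -/
def tsujiM (g : ℂ → ℂ) (r : ℝ) : ℝ :=
  (2 * Real.pi)⁻¹ * ∫ θ in Real.arcsin (1 / r)..(Real.pi - Real.arcsin (1 / r)),
    posLog ‖g ((r * Real.sin θ : ℝ) * Complex.exp (θ * Complex.I))‖ /
      (r * Real.sin θ ^ 2)

/-- The Tsuji characteristic `𝔗(r, g) = 𝔪(r, g) + 𝔑(r, g)`. -/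
def tsujiT (g : ℂ → ℂ) (r : ℝ) : ℝ := tsujiM g r + tsujiBigN g r

/-- `𝔗(r, g) = O(log r)` as `r → ∞`. -/
def TsujiLogBounded (g : ℂ → ℂ) : Prop :=
  ∃ C r₀ : ℝ, ∀ r : ℝ, r₀ ≤ r → tsujiT g r ≤ C * Real.log r

/-- `g` has at least `n` zeros, counted with multiplicity, in the set `S`. -/
def ZerosAtLeast (g : ℂ → ℂ) (S : Set ℂ) (n : ℕ) : Prop :=
  ∃ (zs : Finset ℂ) (m : ℂ → ℕ),
    (↑zs : Set ℂ) ⊆ S ∧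
    (∀ z ∈ zs, 1 ≤ m z ∧ ∀ k < m z, iteratedDeriv k g z = 0) ∧
    n ≤ ∑ z ∈ zs, m z

/-- The logarithmic derivative `L = f'/f`. -/
def Lfun (f : ℂ → ℂ) : ℂ → ℂ := fun z => deriv f z / f z

/-- The auxiliary function `F = (T·L − 1)/(L + T)`, `T = tan`. -/
def Ffun (f : ℂ → ℂ) : ℂ → ℂ := fun z =>
  (Complex.tan z * Lfun f z - 1) / (Lfun f z + Complex.tan z)

/-- The auxiliary function `s_a = T·(F − a)/(T − F)`. -/
def sfun (f : ℂ → ℂ) (a : ℂ) : ℂ → ℂ := fun z =>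
  Complex.tan z * (Ffun f z - a) / (Complex.tan z - Ffun f z)

lemma cos_ne_zero_of_im_pos {z : ℂ} (hz : 0 < z.im) : Complex.cos z ≠ 0 := by
  intro h
  rw [Complex.cos_eq_zero_iff] at h
  obtain ⟨k, hk⟩ := h
  have : z.im = 0 := by rw [hk]; simp
  linarith

lemma tan_im_bound {z : ℂ} (hz : 0 < z.im) :
    (1 - Real.exp (-2 * z.im)) / 2 ≤ (Complex.tan z).im ∧ 0 < (Complex.tan z).im := by
  set x := z.re
  set y := z.im
  have hc := cos_ne_zero_of_im_pos hz
  have hN : 0 < Complex.normSq (Complex.cos z) := Complex.normSq_pos.mpr hc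
  have hs : Complex.sin z =
      (Real.sin x * Real.cosh y : ℝ) + (Real.cos x * Real.sinh y : ℝ) * I := by
    rw [Complex.sin_eq, ← Complex.ofReal_sin, ← Complex.ofReal_cos, ← Complex.ofReal_sinh,
      ← Complex.ofReal_cosh]
    push_cast; ring
  have hcz : Complex.cos z =
      (Real.cos x * Real.cosh y : ℝ) - (Real.sin x * Real.sinh y : ℝ) * I := by
    rw [Complex.cos_eq, ← Complex.ofReal_sin, ← Complex.ofReal_cos, ← Complex.ofReal_sinh,
      ← Complex.ofReal_cosh]
    push_cast; ring
  have hsre : (Complex.sin z).re = Real.sin x * Real.cosh y := by rw [hs]; simp [Complex.sin_ofReal_re, Complex.cos_ofReal_re, Complex.sinh_ofReal_re, Complex.cosh_ofReal_re]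
  have hsim : (Complex.sin z).im = Real.cos x * Real.sinh y := by rw [hs]; simp [Complex.sin_ofReal_re, Complex.cos_ofReal_re, Complex.sinh_ofReal_re, Complex.cosh_ofReal_re]
  have hcre : (Complex.cos z).re = Real.cos x * Real.cosh y := by rw [hcz]; simp [Complex.sin_ofReal_re, Complex.cos_ofReal_re, Complex.sinh_ofReal_re, Complex.cosh_ofReal_re]
  have hcim : (Complex.cos z).im = -(Real.sin x * Real.sinh y) := by rw [hcz]; simp [Complex.sin_ofReal_re, Complex.cos_ofReal_re, Complex.sinh_ofReal_re, Complex.cosh_ofReal_re]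
  have him : (Complex.tan z).im =
      Real.sinh y * Real.cosh y / Complex.normSq (Complex.cos z) := by
    rw [Complex.tan_eq_sin_div_cos, Complex.div_im, hsim, hsre, hcre, hcim, div_sub_div_same]
    congr 1
    linear_combination (Real.sinh y * Real.cosh y) * Real.sin_sq_add_cos_sq x
  have hsinh : 0 < Real.sinh y := Real.sinh_pos_iff.mpr hz
  have hcosh : 0 < Real.cosh y := Real.cosh_pos y
  have hNle : Complex.normSq (Complex.cos z) ≤ Real.cosh y ^ 2 := by
    rw [Complex.normSq_apply, hcre, hcim]
    have h1 : Real.sinh y ^ 2 ≤ Real.cosh y ^ 2 := by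
      nlinarith [Real.cosh_sq y]
    have := Real.sin_sq_add_cos_sq x
    nlinarith [sq_nonneg (Real.sin x), sq_nonneg (Real.cos x)]
  have hpos : 0 < (Complex.tan z).im := by rw [him]; positivity
  refine ⟨?_, hpos⟩
  have htanh : Real.sinh y / Real.cosh y ≤ (Complex.tan z).im := by
    rw [him, div_le_div_iff₀ hcosh hN]
    nlinarith
  refine le_trans ?_ htanh
  rw [div_le_div_iff₀ (by norm_num) hcosh]
  rw [Real.sinh_eq, Real.cosh_eq]
  have e1 : Real.exp (y/2) ^ 2 = Real.exp y := by
    rw [sq, ← Real.exp_add]; ring_nf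
  have e2 : Real.exp (-(3*y)/2) ^ 2 = Real.exp (-y) * Real.exp (-2*y) := by
    rw [sq, ← Real.exp_add, ← Real.exp_add]; ring_nf
  have e3 : Real.exp (y/2) * Real.exp (-(3*y)/2) = Real.exp (-y) := by
    rw [← Real.exp_add]; ring_nf
  nlinarith [sq_nonneg (Real.exp (y/2) - Real.exp (-(3*y)/2)), Real.exp_pos (-y),
    Real.exp_pos (-2*y)]

theorem stmt5 :
    (∀ z : ℂ, 0 < z.im →
      Complex.cos z ≠ 0 ∧
      (1 - Real.exp (-2 * z.im)) / 2 ≤ (Complex.tan z).im ∧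
      0 < (Complex.tan z).im) ∧
    ∃ C : ℝ, 0 < C ∧ ∃ δ : ℝ, 0 < δ ∧
      ∀ z : ℂ, 0 < z.im → z.im < δ → z.im ≤ C * (Complex.tan z).im := by
  constructor
  · intro z hz
    exact ⟨cos_ne_zero_of_im_pos hz, (tan_im_bound hz).1, (tan_im_bound hz).2⟩
  · refine ⟨2, by norm_num, 1/2, by norm_num, fun z hz hz2 => ?_⟩
    have h1 := (tan_im_bound hz).1
    have h2 := Real.add_one_le_exp (2 * z.im)
    have h3 : Real.exp (-2 * z.im) * Real.exp (2 * z.im) = 1 := by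
      rw [← Real.exp_add]; ring_nf; exact Real.exp_zero
    have h4 : Real.exp (-2 * z.im) ≤ 1 - z.im := by
      nlinarith [Real.exp_pos (2 * z.im)]
    linarith

end
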